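/- arXiv:0910.2393 — 3 statements merged into one kernel-verified Lean document; each statement's English description precedes it below -/
import Mathlib

section
/- Let (f_*, f^*) be a Chu morphism of biextensional quantum Chu spaces from H to K. Then for every nonzero ψ ∈ H and every closed subspace S of K: ψ ∈ f^*(S) if and only if φ ∈ S, where φ is any representative of the ray f_*([ψ]). -/
/-- The quantum evaluation `e(ψ, S) = ‖P_S ψ‖² / ‖ψ‖²` for a closed subspace `S`
of a complex Hilbert space. -/
noncomputable def qeval {H : Type*} [NormedAddCommGroup H] [InnerProductSpace ℂ H]
    [CompleteSpace H] (ψ : H) (S : Submodule ℂ H) (hS : IsClosed (S : Set H)) : ℝ :=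
  letI : CompleteSpace S := hS.completeSpace_coe
  ‖(S.orthogonalProjectionOnto ψ : H)‖ ^ 2 / ‖ψ‖ ^ 2

lemma qeval_eq_one_iff {H : Type*} [NormedAddCommGroup H] [InnerProductSpace ℂ H]
    [CompleteSpace H] (ψ : H) (hψ : ψ ≠ 0) (S : Submodule ℂ H)
    (hS : IsClosed (S : Set H)) :
    qeval ψ S hS = 1 ↔ ψ ∈ S := by
  letI : CompleteSpace S := hS.completeSpace_coe
  have hn : ‖ψ‖ ^ 2 ≠ 0 := pow_ne_zero 2 (norm_ne_zero_iff.mpr hψ)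
  unfold qeval
  rw [div_eq_one_iff_eq hn]
  constructor
  · intro h
    have hpyth := Submodule.norm_sq_eq_add_norm_sq_projection ψ S
    have hc : ‖(S.orthogonalProjectionOnto ψ : H)‖ = ‖S.orthogonalProjectionOnto ψ‖ := rfl
    rw [hc] at h
    have h0 : ‖Sᗮ.orthogonalProjectionOnto ψ‖ ^ 2 = 0 := by linarith
    have h0' : Sᗮ.orthogonalProjectionOnto ψ = 0 := by
      have := pow_eq_zero_iff (n := 2) (by norm_num) |>.mp h0
      exact norm_eq_zero.mp this
    have : (S.orthogonalProjectionOnto ψ : H) + (Sᗮ.orthogonalProjectionOnto ψ : H) = ψ :=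
      Submodule.starProjection_add_starProjection_orthogonal (K := S) ψ
    rw [h0'] at this
    simp only [ZeroMemClass.coe_zero, add_zero] at this
    rw [← this]
    exact (S.orthogonalProjectionOnto ψ).2
  · intro h
    exact congrArg (fun x : H => ‖x‖ ^ 2) ((Submodule.starProjection_eq_self_iff (K := S)).mpr h)

/-- Let `(f₁, f₂)` be a Chu morphism of biextensional quantum Chu spaces from `H` to `K`:
`f₁ : ℙ(H) → ℙ(K)`, `f₂` maps closed subspaces of `K` to closed subspaces of `H`, and
`e_H(ψ, f₂ S) = e_K(φ, S)` whenever `φ` represents `f₁ [ψ]`.  Then for every nonzero `ψ ∈ H`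
and closed subspace `S` of `K`: `ψ ∈ f₂ S` iff `φ ∈ S`, where `φ` is any representative of
the ray `f₁ [ψ]`. -/
theorem chu_mem_adjointness
    {H K : Type*} [NormedAddCommGroup H] [InnerProductSpace ℂ H] [CompleteSpace H]
    [NormedAddCommGroup K] [InnerProductSpace ℂ K] [CompleteSpace K]
    (f₁ : Projectivization ℂ H → Projectivization ℂ K)
    (f₂ : {S : Submodule ℂ K // IsClosed (S : Set K)} →
          {S : Submodule ℂ H // IsClosed (S : Set H)})
    (hchu : ∀ (ψ : H) (hψ : ψ ≠ 0) (S : {S : Submodule ℂ K // IsClosed (S : Set K)})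
      (φ : K) (hφ : φ ≠ 0), Projectivization.mk ℂ φ hφ = f₁ (Projectivization.mk ℂ ψ hψ) →
      qeval ψ (f₂ S).1 (f₂ S).2 = qeval φ S.1 S.2) :
    ∀ (ψ : H) (hψ : ψ ≠ 0) (S : {S : Submodule ℂ K // IsClosed (S : Set K)})
      (φ : K) (hφ : φ ≠ 0), Projectivization.mk ℂ φ hφ = f₁ (Projectivization.mk ℂ ψ hψ) →
      (ψ ∈ (f₂ S).1 ↔ φ ∈ S.1) := by
  intro ψ hψ S φ hφ hmk
  rw [← qeval_eq_one_iff ψ hψ (f₂ S).1 (f₂ S).2, ← qeval_eq_one_iff φ hφ S.1 S.2,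
    hchu ψ hψ S φ hφ hmk]
end

section
/- Let (f_*, f^*) be a Chu morphism of biextensional quantum Chu spaces from H to K. Then f_* is injective if and only if for every nonzero ψ ∈ H, f^*(L) = ℂψ, where L is the one-dimensional closed subspace of K given by the ray f_*([ψ]) and ℂψ is the one-dimensional subspace spanned by ψ. -/
/-- The one-dimensional subspace determined by a point of projective space is closed. -/
theorem proj_submodule_isClosed {K : Type*} [NormedAddCommGroup K] [InnerProductSpace ℂ K]
    (v : Projectivization ℂ K) : IsClosed ((v.submodule : Submodule ℂ K) : Set K) := by
  rw [Projectivization.submodule_eq]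
  exact Submodule.closed_of_finiteDimensional _


/-- A nonzero element of `v.submodule` represents `v`. -/
lemma mk_eq_of_mem_submodule {K : Type*} [NormedAddCommGroup K] [InnerProductSpace ℂ K]
    (v : Projectivization ℂ K) (φ : K) (hφ : φ ≠ 0) (h : φ ∈ v.submodule) :
    Projectivization.mk ℂ φ hφ = v := by
  rw [Projectivization.submodule_eq, Submodule.mem_span_singleton] at h
  obtain ⟨c, rfl⟩ := h
  exact ((Projectivization.mk_eq_mk_iff' ℂ (c • v.rep) v.rep hφ v.rep_nonzero).mpr
    ⟨c, rfl⟩).trans v.mk_rep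

/-- Let `(f₁, f₂)` be a Chu morphism of biextensional quantum Chu spaces from `H` to `K`.
Then `f₁` is injective iff for every nonzero `ψ ∈ H`, `f₂ L = ℂψ`, where `L` is the
one-dimensional closed subspace of `K` given by the ray `f₁ [ψ]` and `ℂψ = span ℂ {ψ}`. -/
theorem chu_injective_iff_retract
    {H K : Type*} [NormedAddCommGroup H] [InnerProductSpace ℂ H] [CompleteSpace H]
    [NormedAddCommGroup K] [InnerProductSpace ℂ K] [CompleteSpace K]
    (f₁ : Projectivization ℂ H → Projectivization ℂ K)
    (f₂ : {S : Submodule ℂ K // IsClosed (S : Set K)} →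
          {S : Submodule ℂ H // IsClosed (S : Set H)})
    (hchu : ∀ (ψ : H) (hψ : ψ ≠ 0) (S : {S : Submodule ℂ K // IsClosed (S : Set K)})
      (φ : K) (hφ : φ ≠ 0), Projectivization.mk ℂ φ hφ = f₁ (Projectivization.mk ℂ ψ hψ) →
      qeval ψ (f₂ S).1 (f₂ S).2 = qeval φ S.1 S.2) :
    Function.Injective f₁ ↔
      ∀ (ψ : H) (hψ : ψ ≠ 0),
        (f₂ ⟨(f₁ (Projectivization.mk ℂ ψ hψ)).submodule,
              proj_submodule_isClosed _⟩).1 = Submodule.span ℂ {ψ} := by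
  constructor
  · intro hinj ψ hψ
    set L : {S : Submodule ℂ K // IsClosed (S : Set K)} :=
      ⟨(f₁ (Projectivization.mk ℂ ψ hψ)).submodule, proj_submodule_isClosed _⟩ with hL
    apply le_antisymm
    · intro χ hχ
      by_cases hχ0 : χ = 0
      · simp [hχ0]
      have key := hchu χ hχ0 L ((f₁ (Projectivization.mk ℂ χ hχ0)).rep)
        (Projectivization.rep_nonzero _) (Projectivization.mk_rep _)
      have h1 : qeval χ (f₂ L).1 (f₂ L).2 = 1 :=
        (qeval_eq_one_iff χ hχ0 _ _).mpr hχ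
      rw [h1] at key
      have h2 : (f₁ (Projectivization.mk ℂ χ hχ0)).rep ∈ L.1 :=
        (qeval_eq_one_iff _ (Projectivization.rep_nonzero _) _ _).mp key.symm
      have h3 : f₁ (Projectivization.mk ℂ χ hχ0) = f₁ (Projectivization.mk ℂ ψ hψ) := by
        rw [← mk_eq_of_mem_submodule _ _ (Projectivization.rep_nonzero
          (f₁ (Projectivization.mk ℂ χ hχ0))) h2, Projectivization.mk_rep]
      have h4 := hinj h3
      rw [Projectivization.mk_eq_mk_iff'] at h4
      obtain ⟨a, ha⟩ := h4
      rw [Submodule.mem_span_singleton]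
      exact ⟨a, ha⟩
    · rw [Submodule.span_singleton_le_iff_mem]
      have key := hchu ψ hψ L ((f₁ (Projectivization.mk ℂ ψ hψ)).rep)
        (Projectivization.rep_nonzero _) (Projectivization.mk_rep _)
      have h1 : qeval ((f₁ (Projectivization.mk ℂ ψ hψ)).rep) L.1 L.2 = 1 := by
        apply (qeval_eq_one_iff _ (Projectivization.rep_nonzero _) _ _).mpr
        show _ ∈ (f₁ (Projectivization.mk ℂ ψ hψ)).submodule
        rw [Projectivization.submodule_eq]
        exact Submodule.mem_span_singleton_self _
      rw [h1] at key
      exact (qeval_eq_one_iff ψ hψ _ _).mp key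
  · intro h x y hxy
    induction' x using Projectivization.ind with ψ hψ
    induction' y using Projectivization.ind with χ hχ
    have h1 := h ψ hψ
    have h2 := h χ hχ
    rw [show (⟨(f₁ (Projectivization.mk ℂ χ hχ)).submodule, proj_submodule_isClosed _⟩ :
        {S : Submodule ℂ K // IsClosed (S : Set K)}) =
      ⟨(f₁ (Projectivization.mk ℂ ψ hψ)).submodule, proj_submodule_isClosed _⟩ from
      Subtype.ext (by rw [hxy])] at h2
    rw [h1] at h2
    have : χ ∈ Submodule.span ℂ {ψ} := h2 ▸ Submodule.mem_span_singleton_self χ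
    rw [Submodule.mem_span_singleton] at this
    obtain ⟨a, ha⟩ := this
    symm
    rw [Projectivization.mk_eq_mk_iff']
    exact ⟨a, ha⟩
end

section
/- Let (f_*, f^*) be a Chu morphism of biextensional quantum Chu spaces from H to K with f_* injective. Then f_* preserves and reflects orthogonality: for all nonzero φ, ψ ∈ H, ⟪φ, ψ⟫ = 0 if and only if ⟪φ', ψ'⟫ = 0, where φ', ψ' are any representatives of f_*([φ]) and f_*([ψ]). -/
open Submodule

lemma qeval_eq_one_of_mem {H : Type*} [NormedAddCommGroup H] [InnerProductSpace ℂ H]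
    [CompleteSpace H] {ψ : H} (hψ : ψ ≠ 0) {S : Submodule ℂ H} (hS : IsClosed (S : Set H))
    (h : ψ ∈ S) : qeval ψ S hS = 1 := by
  unfold qeval
  letI : CompleteSpace S := hS.completeSpace_coe
  rw [← starProjection_apply, starProjection_eq_self_iff.2 h]
  exact div_self (pow_ne_zero 2 (norm_ne_zero_iff.2 hψ))

lemma mem_of_qeval_eq_one {H : Type*} [NormedAddCommGroup H] [InnerProductSpace ℂ H]
    [CompleteSpace H] {ψ : H} (hψ : ψ ≠ 0) {S : Submodule ℂ H} (hS : IsClosed (S : Set H))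
    (h : qeval ψ S hS = 1) : ψ ∈ S := by
  unfold qeval at h
  letI : CompleteSpace S := hS.completeSpace_coe
  set p : H := (orthogonalProjection S ψ : H) with hp
  have hnum : ‖p‖ ^ 2 = ‖ψ‖ ^ 2 := by
    have := (div_eq_one_iff_eq (pow_ne_zero 2 (norm_ne_zero_iff.2 hψ))).1 h
    exact this
  have horth : (inner ℂ p (ψ - p) : ℂ) = 0 := by
    have hmem : ψ - p ∈ Sᗮ := sub_starProjection_mem_orthogonal ψ
    exact hmem p (orthogonalProjection S ψ).2
  have hdecomp : ‖ψ‖ ^ 2 = ‖p‖ ^ 2 + ‖ψ - p‖ ^ 2 := by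
    have h' := norm_add_sq_eq_norm_sq_add_norm_sq_of_inner_eq_zero p (ψ - p) horth
    rw [add_sub_cancel] at h'
    nlinarith [h']
  have : ‖ψ - p‖ ^ 2 = 0 := by nlinarith [hdecomp, hnum]
  have hzero : ψ - p = 0 := by
    have := pow_eq_zero_iff (n := 2) (by norm_num) |>.1 this
    exact norm_eq_zero.1 this
  have : ψ = p := by rw [sub_eq_zero] at hzero; exact hzero
  rw [this]
  exact (orthogonalProjection S ψ).2

lemma qeval_eq_zero_iff {H : Type*} [NormedAddCommGroup H] [InnerProductSpace ℂ H]
    [CompleteSpace H] {ψ : H} (hψ : ψ ≠ 0) {S : Submodule ℂ H} (hS : IsClosed (S : Set H)) :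
    qeval ψ S hS = 0 ↔ ψ ∈ Sᗮ := by
  unfold qeval
  letI : CompleteSpace S := hS.completeSpace_coe
  rw [div_eq_zero_iff]
  constructor
  · rintro (h | h)
    · have : (orthogonalProjection S ψ : H) = 0 := norm_eq_zero.1 (pow_eq_zero_iff (n := 2) (by norm_num) |>.1 h)
      have : orthogonalProjection S ψ = 0 := by
        ext; exact this
      exact orthogonalProjection_eq_zero_iff.1 this
    · exact absurd (norm_eq_zero.1 (pow_eq_zero_iff (n := 2) (by norm_num) |>.1 h)) hψ
  · intro h
    left
    rw [orthogonalProjection_eq_zero_iff.2 h]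
    simp

/-- Let `(f₁, f₂)` be a Chu morphism of biextensional quantum Chu spaces from `H` to `K`
with `f₁` injective.  Then `f₁` preserves and reflects orthogonality: for nonzero
`φ, ψ ∈ H`, `⟪φ, ψ⟫ = 0` iff `⟪φ', ψ'⟫ = 0`, where `φ'`, `ψ'` are any representatives
of `f₁ [φ]` and `f₁ [ψ]`. -/
theorem chu_injective_preserves_reflects_orthogonality
    {H K : Type*} [NormedAddCommGroup H] [InnerProductSpace ℂ H] [CompleteSpace H]
    [NormedAddCommGroup K] [InnerProductSpace ℂ K] [CompleteSpace K]
    (f₁ : Projectivization ℂ H → Projectivization ℂ K)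
    (f₂ : {S : Submodule ℂ K // IsClosed (S : Set K)} →
          {S : Submodule ℂ H // IsClosed (S : Set H)})
    (hchu : ∀ (ψ : H) (hψ : ψ ≠ 0) (S : {S : Submodule ℂ K // IsClosed (S : Set K)})
      (φ : K) (hφ : φ ≠ 0), Projectivization.mk ℂ φ hφ = f₁ (Projectivization.mk ℂ ψ hψ) →
      qeval ψ (f₂ S).1 (f₂ S).2 = qeval φ S.1 S.2)
    (hinj : Function.Injective f₁) :
    ∀ (φ ψ : H) (hφ : φ ≠ 0) (hψ : ψ ≠ 0) (φ' ψ' : K) (hφ' : φ' ≠ 0) (hψ' : ψ' ≠ 0),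
      Projectivization.mk ℂ φ' hφ' = f₁ (Projectivization.mk ℂ φ hφ) →
      Projectivization.mk ℂ ψ' hψ' = f₁ (Projectivization.mk ℂ ψ hψ) →
      (inner ℂ φ ψ = (0 : ℂ) ↔ inner ℂ φ' ψ' = (0 : ℂ)) := by
  intro φ ψ hφ hψ φ' ψ' hφ' hψ' hfφ hfψ
  constructor
  · -- preserves orthogonality (uses injectivity)
    intro h0
    by_contra hne
    have hSc : IsClosed ((ℂ ∙ ψ' : Submodule ℂ K) : Set K) :=
      (ℂ ∙ ψ').closed_of_finiteDimensional
    set S : {S : Submodule ℂ K // IsClosed (S : Set K)} := ⟨ℂ ∙ ψ', hSc⟩ with hSdef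
    set T := f₂ S with hT
    -- ψ ∈ T
    have h1 : qeval ψ T.1 T.2 = 1 := by
      rw [hchu ψ hψ S ψ' hψ' hfψ]
      exact qeval_eq_one_of_mem hψ' hSc (mem_span_singleton_self ψ')
    have hψT : ψ ∈ T.1 := mem_of_qeval_eq_one hψ T.2 h1
    -- the projection of φ on T is nonzero
    have h2 : qeval φ T.1 T.2 ≠ 0 := by
      rw [hchu φ hφ S φ' hφ' hfφ]
      intro h
      have := (qeval_eq_zero_iff hφ' hSc).1 h
      rw [mem_orthogonal_singleton_iff_inner_right] at this
      exact hne (inner_eq_zero_symm.1 this)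
    letI : CompleteSpace T.1 := T.2.completeSpace_coe
    set χ : H := (orthogonalProjection T.1 φ : H) with hχdef
    have hχ : χ ≠ 0 := by
      intro h
      apply h2
      rw [(qeval_eq_zero_iff hφ T.2)]
      apply orthogonalProjection_eq_zero_iff.1
      ext
      exact h
    -- χ ⊥ ψ
    have hχψ : (inner ℂ χ ψ : ℂ) = 0 := by
      have h := inner_starProjection_left_eq_right (K := T.1) φ ψ
      rw [starProjection_eq_self_iff.2 hψT] at h
      rw [starProjection_apply, ← hχdef] at h
      rw [h, h0]
    -- the image of χ lies on the ray of ψ'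
    set p := f₁ (Projectivization.mk ℂ χ hχ) with hpdef
    have h3 : qeval p.rep (S : Submodule ℂ K) hSc = 1 := by
      rw [← hchu χ hχ S p.rep p.rep_nonzero (p.mk_rep.trans hpdef)]
      exact qeval_eq_one_of_mem hχ T.2 (orthogonalProjection T.1 φ).2
    have hrepS : p.rep ∈ (ℂ ∙ ψ') := mem_of_qeval_eq_one p.rep_nonzero hSc h3
    obtain ⟨c, hc⟩ := mem_span_singleton.1 hrepS
    have hmk : p = Projectivization.mk ℂ ψ' hψ' := by
      rw [← p.mk_rep]
      exact (Projectivization.mk_eq_mk_iff' ℂ p.rep ψ' p.rep_nonzero hψ').2 ⟨c, hc⟩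
    have : Projectivization.mk ℂ χ hχ = Projectivization.mk ℂ ψ hψ := by
      apply hinj
      rw [← hpdef, hmk, hfψ]
    obtain ⟨a, ha⟩ := (Projectivization.mk_eq_mk_iff' ℂ χ ψ hχ hψ).1 this
    -- but then ⟪χ, ψ⟫ ≠ 0, contradiction
    rw [← ha, inner_smul_left] at hχψ
    rcases mul_eq_zero.1 hχψ with h | h
    · have : a = 0 := by simpa using h
      rw [this, zero_smul] at ha
      exact hχ ha.symm
    · exact hψ (inner_self_eq_zero.1 h)
  · -- reflects orthogonality
    intro h0
    have hSc : IsClosed ((ℂ ∙ φ' : Submodule ℂ K) : Set K) :=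
      (ℂ ∙ φ').closed_of_finiteDimensional
    set S : {S : Submodule ℂ K // IsClosed (S : Set K)} := ⟨ℂ ∙ φ', hSc⟩ with hSdef
    set T := f₂ S with hT
    have h1 : qeval φ T.1 T.2 = 1 := by
      rw [hchu φ hφ S φ' hφ' hfφ]
      exact qeval_eq_one_of_mem hφ' hSc (mem_span_singleton_self φ')
    have hφT : φ ∈ T.1 := mem_of_qeval_eq_one hφ T.2 h1
    have h2 : qeval ψ T.1 T.2 = 0 := by
      rw [hchu ψ hψ S ψ' hψ' hfψ]
      rw [qeval_eq_zero_iff hψ' hSc]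
      exact mem_orthogonal_singleton_iff_inner_right.2 h0
    have hψT : ψ ∈ T.1ᗮ := (qeval_eq_zero_iff hψ T.2).1 h2
    exact hψT φ hφT
end
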